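/- Let H_1 be an r_1-regular graph on n_1 vertices and H_2 an r_2-regular graph on n_2 vertices with n_1 - r_2 = n_2 - r_1 > max{r_1, r_2}. Then the join G = H_1 ∇ H_2 has least adjacency eigenvalue λ_min(G) = r_1 - n_2, and this eigenvalue has the partition vector p_{V(H_1)} as an eigenvector; consequently G is A-exact. -/

import Mathlib

open Finset Matrix BigOperators

set_option linter.unusedSectionVars false

variable {V : Type*} [Fintype V] [DecidableEq V]

/-- Number of edges of `G` with exactly one endpoint in `S` (each unordered edge counted once,
as the ordered pair going out of `S`). -/
def cutNum (G : SimpleGraph V) [DecidableRel G.Adj] (S : Finset V) : ℕ :=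
  (Finset.univ.filter (fun p : V × V => G.Adj p.1 p.2 ∧ p.1 ∈ S ∧ p.2 ∉ S)).card

/-- Number of edges of `G` with both endpoints in `S` or both outside `S`. -/
def cohNum (G : SimpleGraph V) [DecidableRel G.Adj] (S : Finset V) : ℕ :=
  G.edgeFinset.card - cutNum G S

/-- The maximum cut of `G`. -/
def mcut (G : SimpleGraph V) [DecidableRel G.Adj] : ℕ :=
  Finset.univ.sup (fun S : Finset V => cutNum G S)

/-- The ±1 partition vector of a vertex subset `S`. -/
def pvec (S : Finset V) : V → ℝ := fun v => if v ∈ S then 1 else -1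

/-- The signless Laplacian matrix `Q = D + A` of a graph. -/
def signlessLap (G : SimpleGraph V) [DecidableRel G.Adj] : Matrix V V ℝ :=
  G.degMatrix ℝ + G.adjMatrix ℝ

lemma isHermitian_adj (G : SimpleGraph V) [DecidableRel G.Adj] :
    (G.adjMatrix ℝ).IsHermitian := by
  rw [IsHermitian, conjTranspose_eq_transpose_of_trivial]
  exact SimpleGraph.isSymm_adjMatrix G

lemma isHermitian_lap (G : SimpleGraph V) [DecidableRel G.Adj] :
    (G.lapMatrix ℝ).IsHermitian := by
  rw [IsHermitian, conjTranspose_eq_transpose_of_trivial]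
  exact SimpleGraph.isSymm_lapMatrix ℝ G

lemma isHermitian_signlessLap (G : SimpleGraph V) [DecidableRel G.Adj] :
    (signlessLap G).IsHermitian := by
  rw [IsHermitian, conjTranspose_eq_transpose_of_trivial]
  exact (SimpleGraph.isSymm_degMatrix ℝ G).add (SimpleGraph.isSymm_adjMatrix G)

/-- The spanning subgraph of `G` consisting of the edges between `S` and its complement. -/
def crossGraph (G : SimpleGraph V) (S : Finset V) : SimpleGraph V where
  Adj u v := G.Adj u v ∧ ((u ∈ S) ↔ (v ∉ S))
  symm := ⟨fun u v h => ⟨h.1.symm, by tauto⟩⟩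
  loopless := ⟨fun v h => G.loopless.1 v h.1⟩

/-- The spanning subgraph of `G` consisting of the edges inside `S` or inside its complement. -/
def insideGraph (G : SimpleGraph V) (S : Finset V) : SimpleGraph V where
  Adj u v := G.Adj u v ∧ ((u ∈ S) ↔ (v ∈ S))
  symm := ⟨fun u v h => ⟨h.1.symm, h.2.symm⟩⟩
  loopless := ⟨fun v h => G.loopless.1 v h.1⟩

instance (G : SimpleGraph V) [DecidableRel G.Adj] (S : Finset V) :
    DecidableRel (crossGraph G S).Adj := fun _ _ => inferInstanceAs (Decidable (_ ∧ _))

instance (G : SimpleGraph V) [DecidableRel G.Adj] (S : Finset V) :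
    DecidableRel (insideGraph G S).Adj := fun _ _ => inferInstanceAs (Decidable (_ ∧ _))

/-- The second largest value (with multiplicity) of a finitely indexed family of reals. -/
noncomputable def secondLargest (f : V → ℝ) : ℝ :=
  (Multiset.sort (Finset.univ.val.map f) (· ≤ ·)).getD (Fintype.card V - 2) 0

/-- The join of two graphs: disjoint union plus all edges in between. -/
def joinGraph {α β : Type*} (H₁ : SimpleGraph α) (H₂ : SimpleGraph β) :
    SimpleGraph (α ⊕ β) where
  Adj x y :=
    match x, y with
    | Sum.inl u, Sum.inl v => H₁.Adj u v
    | Sum.inr u, Sum.inr v => H₂.Adj u v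
    | Sum.inl _, Sum.inr _ => True
    | Sum.inr _, Sum.inl _ => True
  symm := ⟨by rintro (u | u) (v | v) h <;> first | exact h.symm | trivial⟩
  loopless := ⟨by
    rintro (u | u) h
    · exact H₁.loopless.1 u h
    · exact H₂.loopless.1 u h⟩

instance {α β : Type*} (H₁ : SimpleGraph α) (H₂ : SimpleGraph β)
    [DecidableRel H₁.Adj] [DecidableRel H₂.Adj] :
    DecidableRel (joinGraph H₁ H₂).Adj := fun x y =>
  match x, y with
  | Sum.inl u, Sum.inl v => inferInstanceAs (Decidable (H₁.Adj u v))
  | Sum.inr u, Sum.inr v => inferInstanceAs (Decidable (H₂.Adj u v))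
  | Sum.inl _, Sum.inr _ => inferInstanceAs (Decidable True)
  | Sum.inr _, Sum.inl _ => inferInstanceAs (Decidable True)



section AuxStmt18

open SimpleGraph

lemma aux_row_sum (G : SimpleGraph V) [DecidableRel G.Adj] {r : ℕ} (hG : G.IsRegularOfDegree r)
    (i : V) : ∑ j : V, (if G.Adj i j then (1 : ℝ) else 0) = r := by
  rw [Finset.sum_boole]
  rw [← SimpleGraph.neighborFinset_eq_filter, SimpleGraph.card_neighborFinset_eq_degree, hG i]

lemma aux_quad_expand (G : SimpleGraph V) [DecidableRel G.Adj] (x y : V → ℝ) :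
    x ⬝ᵥ (G.adjMatrix ℝ *ᵥ y) = ∑ i : V, ∑ j : V, (if G.Adj i j then (1:ℝ) else 0) * (x i * y j) := by
  rw [SimpleGraph.dotProduct_mulVec_adjMatrix]
  congr 1; ext i; congr 1; ext j; split <;> simp

lemma aux_quad_ge (G : SimpleGraph V) [DecidableRel G.Adj] {r : ℕ} (hG : G.IsRegularOfDegree r)
    (x : V → ℝ) : -((r : ℝ) * (x ⬝ᵥ x)) ≤ x ⬝ᵥ (G.adjMatrix ℝ *ᵥ x) := by
  have hcol : ∀ j : V, ∑ i : V, (if G.Adj i j then (1 : ℝ) else 0) = r := by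
    intro j
    simp_rw [G.adj_comm _ j]
    exact aux_row_sum G hG j
  have key : x ⬝ᵥ (G.adjMatrix ℝ *ᵥ x) + (r:ℝ) * (x ⬝ᵥ x)
      = (1/2) * ∑ i : V, ∑ j : V, (if G.Adj i j then (1:ℝ) else 0) * (x i + x j)^2 := by
    have e1 : ∑ i : V, ∑ j : V, (if G.Adj i j then (1:ℝ) else 0) * (x i + x j)^2
        = (∑ i : V, ∑ j : V, (if G.Adj i j then (1:ℝ) else 0) * x i ^ 2)
          + 2 * (∑ i : V, ∑ j : V, (if G.Adj i j then (1:ℝ) else 0) * (x i * x j))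
          + (∑ i : V, ∑ j : V, (if G.Adj i j then (1:ℝ) else 0) * x j ^ 2) := by
      rw [Finset.mul_sum, ← Finset.sum_add_distrib, ← Finset.sum_add_distrib]
      refine Finset.sum_congr rfl fun i _ => ?_
      rw [Finset.mul_sum, ← Finset.sum_add_distrib, ← Finset.sum_add_distrib]
      refine Finset.sum_congr rfl fun j _ => ?_
      ring
    have e2 : ∑ i : V, ∑ j : V, (if G.Adj i j then (1:ℝ) else 0) * x i ^ 2 = (r:ℝ) * (x ⬝ᵥ x) := by
      simp_rw [← Finset.sum_mul, aux_row_sum G hG, dotProduct, Finset.mul_sum]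
      refine Finset.sum_congr rfl fun i _ => by ring
    have e3 : ∑ i : V, ∑ j : V, (if G.Adj i j then (1:ℝ) else 0) * x j ^ 2 = (r:ℝ) * (x ⬝ᵥ x) := by
      rw [Finset.sum_comm]
      simp_rw [← Finset.sum_mul, hcol, dotProduct, Finset.mul_sum]
      refine Finset.sum_congr rfl fun i _ => by ring
    rw [e1, e2, e3, ← aux_quad_expand]
    ring
  have hnn : 0 ≤ ∑ i : V, ∑ j : V, (if G.Adj i j then (1:ℝ) else 0) * (x i + x j)^2 := by
    refine Finset.sum_nonneg fun i _ => Finset.sum_nonneg fun j _ => ?_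
    positivity
  nlinarith [key]

lemma aux_shift_quad (G : SimpleGraph V) [DecidableRel G.Adj] {r : ℕ} (hG : G.IsRegularOfDegree r)
    (y : V → ℝ) (a : ℝ) :
    (y + Function.const V a) ⬝ᵥ (G.adjMatrix ℝ *ᵥ (y + Function.const V a))
      = y ⬝ᵥ (G.adjMatrix ℝ *ᵥ y) + 2*(r:ℝ)*a*(∑ i, y i) + (r:ℝ)*a^2*(Fintype.card V) := by
  have hAc : G.adjMatrix ℝ *ᵥ (Function.const V a) = Function.const V ((r:ℝ)*a) := by
    funext v; exact SimpleGraph.adjMatrix_mulVec_const_apply_of_regular hG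
  have hcA : (Function.const V a) ᵥ* G.adjMatrix ℝ = Function.const V ((r:ℝ)*a) := by
    funext v
    rw [SimpleGraph.adjMatrix_vecMul_apply]
    simp [Function.const, hG v]
  rw [mulVec_add, dotProduct_add, add_dotProduct, add_dotProduct, hAc]
  rw [dotProduct_mulVec (Function.const V a), hcA]
  simp only [dotProduct, Function.const]
  rw [← Finset.sum_mul]
  simp only [Finset.sum_const, Finset.card_univ, nsmul_eq_mul]
  rw [← Finset.mul_sum]
  ring

lemma aux_shift_norm (y : V → ℝ) (a : ℝ) :
    (y + Function.const V a) ⬝ᵥ (y + Function.const V a)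
      = y ⬝ᵥ y + 2*a*(∑ i, y i) + a^2*(Fintype.card V) := by
  simp only [dotProduct, Pi.add_apply, Function.const]
  rw [Finset.mul_sum]
  rw [← Finset.sum_add_distrib]
  have h : ∀ i : V, (y i + a) * (y i + a) = y i * y i + 2*a*y i + a^2 := fun i => by ring
  simp only [h]
  rw [Finset.sum_add_distrib, Finset.sum_add_distrib]
  simp only [Finset.sum_const, Finset.card_univ, nsmul_eq_mul, Finset.mul_sum]
  ring

lemma aux_pvec_self (S : Finset V) : pvec S ⬝ᵥ pvec S = (Fintype.card V : ℝ) := by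
  have h : ∀ i : V, pvec S i * pvec S i = 1 := by
    intro i; unfold pvec; split <;> norm_num
  simp only [dotProduct, h, Finset.sum_const, Finset.card_univ, nsmul_eq_mul, mul_one]

lemma aux_handshake (G : SimpleGraph V) [DecidableRel G.Adj] :
    ∑ i : V, ∑ j : V, (if G.Adj i j then (1:ℝ) else 0) = 2 * G.edgeFinset.card := by
  have h : ∀ i : V, ∑ j : V, (if G.Adj i j then (1:ℝ) else 0) = (G.degree i : ℝ) := by
    intro i
    rw [Finset.sum_boole, ← SimpleGraph.neighborFinset_eq_filter,
      SimpleGraph.card_neighborFinset_eq_degree]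
  simp only [h]
  rw [← Nat.cast_sum]
  rw [SimpleGraph.sum_degrees_eq_twice_card_edges]
  push_cast
  ring

lemma aux_cross_card (G : SimpleGraph V) [DecidableRel G.Adj] (S : Finset V) :
    (Finset.univ.filter (fun p : V × V => G.Adj p.1 p.2 ∧ ((p.1 ∈ S) ↔ (p.2 ∉ S)))).card
      = 2 * cutNum G S := by
  have hsplit : (Finset.univ.filter (fun p : V × V => G.Adj p.1 p.2 ∧ ((p.1 ∈ S) ↔ (p.2 ∉ S))))
      = (Finset.univ.filter (fun p : V × V => G.Adj p.1 p.2 ∧ p.1 ∈ S ∧ p.2 ∉ S))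
        ∪ (Finset.univ.filter (fun p : V × V => G.Adj p.1 p.2 ∧ p.1 ∉ S ∧ p.2 ∈ S)) := by
    rw [← Finset.filter_or]
    refine Finset.filter_congr fun p _ => ?_
    by_cases h1 : p.1 ∈ S <;> by_cases h2 : p.2 ∈ S <;> simp [h1, h2]
  have hdisj : Disjoint
      (Finset.univ.filter (fun p : V × V => G.Adj p.1 p.2 ∧ p.1 ∈ S ∧ p.2 ∉ S))
      (Finset.univ.filter (fun p : V × V => G.Adj p.1 p.2 ∧ p.1 ∉ S ∧ p.2 ∈ S)) := by
    rw [Finset.disjoint_filter]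
    rintro p _ ⟨_, h1, _⟩ ⟨_, h2, _⟩
    exact h2 h1
  have hswap : (Finset.univ.filter (fun p : V × V => G.Adj p.1 p.2 ∧ p.1 ∉ S ∧ p.2 ∈ S)).card
      = cutNum G S := by
    unfold cutNum
    apply Finset.card_nbij (fun p => p.swap)
    · rintro ⟨u, v⟩ hp
      simp only [Finset.mem_filter, Finset.mem_univ, true_and] at hp ⊢
      have hp' : (u, v) ∈ Finset.univ.filter (fun p : V × V => G.Adj p.1 p.2 ∧ p.1 ∉ S ∧ p.2 ∈ S) := hp
      simp only [Finset.mem_filter, Finset.mem_univ, true_and] at hp'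
      exact Finset.mem_filter.mpr ⟨Finset.mem_univ _, hp'.1.symm, hp'.2.2, hp'.2.1⟩
    · rintro ⟨u, v⟩ - ⟨u', v'⟩ - h
      simpa [Prod.ext_iff, and_comm] using h
    · rintro ⟨u, v⟩ hp
      simp only [Finset.coe_filter, Set.mem_setOf_eq, Finset.mem_univ, true_and,
        Set.mem_image] at hp ⊢
      exact ⟨(v, u), ⟨hp.1.symm, hp.2.2, hp.2.1⟩, rfl⟩
  rw [hsplit, Finset.card_union_of_disjoint hdisj, hswap]
  unfold cutNum
  ring

lemma aux_pvec_quad (G : SimpleGraph V) [DecidableRel G.Adj] (S : Finset V) :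
    pvec S ⬝ᵥ (G.adjMatrix ℝ *ᵥ pvec S)
      = 2 * (G.edgeFinset.card : ℝ) - 4 * (cutNum G S : ℝ) := by
  rw [aux_quad_expand]
  have hterm : ∀ i j : V, (if G.Adj i j then (1:ℝ) else 0) * (pvec S i * pvec S j)
      = (if G.Adj i j then (1:ℝ) else 0)
        - 2 * (if (G.Adj i j ∧ ((i ∈ S) ↔ (j ∉ S))) then (1:ℝ) else 0) := by
    intro i j
    unfold pvec
    by_cases h : G.Adj i j <;> by_cases h1 : i ∈ S <;> by_cases h2 : j ∈ S <;>
      simp [h, h1, h2] <;> norm_num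
  simp only [hterm]
  simp only [Finset.sum_sub_distrib]
  rw [aux_handshake]
  congr 1
  have : ∑ i : V, ∑ j : V, 2 * (if (G.Adj i j ∧ ((i ∈ S) ↔ (j ∉ S))) then (1:ℝ) else 0)
      = 2 * ∑ p : V × V, (if (G.Adj p.1 p.2 ∧ ((p.1 ∈ S) ↔ (p.2 ∉ S))) then (1:ℝ) else 0) := by
    rw [Fintype.sum_prod_type, Finset.mul_sum]
    refine Finset.sum_congr rfl fun i _ => ?_
    rw [Finset.mul_sum]
  rw [this, Finset.sum_boole, aux_cross_card]
  push_cast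
  ring

lemma aux_sum_sub_distrib_placeholder : True := trivial

end AuxStmt18

section JoinAux

variable {n₁ n₂ r₁ r₂ : ℕ} {H₁ : SimpleGraph (Fin n₁)} {H₂ : SimpleGraph (Fin n₂)}
    [DecidableRel H₁.Adj] [DecidableRel H₂.Adj]

lemma aux_join_quad (x : Fin n₁ ⊕ Fin n₂ → ℝ) :
    x ⬝ᵥ ((joinGraph H₁ H₂).adjMatrix ℝ *ᵥ x)
      = (x ∘ Sum.inl) ⬝ᵥ (H₁.adjMatrix ℝ *ᵥ (x ∘ Sum.inl))
        + (x ∘ Sum.inr) ⬝ᵥ (H₂.adjMatrix ℝ *ᵥ (x ∘ Sum.inr))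
        + 2 * (∑ i, x (Sum.inl i)) * (∑ j, x (Sum.inr j)) := by
  rw [aux_quad_expand, aux_quad_expand, aux_quad_expand]
  rw [Fintype.sum_sum_type]
  simp only [Fintype.sum_sum_type]
  have h1 : ∀ (u v : Fin n₁), (joinGraph H₁ H₂).Adj (Sum.inl u) (Sum.inl v) = H₁.Adj u v :=
    fun _ _ => rfl
  have h2 : ∀ (u v : Fin n₂), (joinGraph H₁ H₂).Adj (Sum.inr u) (Sum.inr v) = H₂.Adj u v :=
    fun _ _ => rfl
  have h3 : ∀ (u : Fin n₁) (v : Fin n₂), (joinGraph H₁ H₂).Adj (Sum.inl u) (Sum.inr v) = True :=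
    fun _ _ => rfl
  have h4 : ∀ (u : Fin n₂) (v : Fin n₁), (joinGraph H₁ H₂).Adj (Sum.inr u) (Sum.inl v) = True :=
    fun _ _ => rfl
  simp only [h1, h2, h3, h4, if_true, one_mul, Function.comp]
  rw [Finset.sum_add_distrib, Finset.sum_add_distrib]
  have e1 : ∑ i : Fin n₁, ∑ j : Fin n₂, x (Sum.inl i) * x (Sum.inr j)
      = (∑ i, x (Sum.inl i)) * (∑ j, x (Sum.inr j)) := by
    rw [Finset.sum_mul]; exact Finset.sum_congr rfl fun i _ => (Finset.mul_sum _ _ _).symm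
  have e2 : ∑ i : Fin n₂, ∑ j : Fin n₁, x (Sum.inr i) * x (Sum.inl j)
      = (∑ i, x (Sum.inl i)) * (∑ j, x (Sum.inr j)) := by
    rw [Finset.sum_comm, Finset.sum_mul]
    refine Finset.sum_congr rfl fun i _ => ?_
    rw [Finset.mul_sum]
    exact Finset.sum_congr rfl fun j _ => mul_comm _ _
  rw [e1, e2]
  ring

lemma aux_norm_split (x : Fin n₁ ⊕ Fin n₂ → ℝ) :
    x ⬝ᵥ x = (x ∘ Sum.inl) ⬝ᵥ (x ∘ Sum.inl) + (x ∘ Sum.inr) ⬝ᵥ (x ∘ Sum.inr) := by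
  simp [dotProduct, Fintype.sum_sum_type, Function.comp]

lemma aux_join_psd (h₁ : H₁.IsRegularOfDegree r₁) (h₂ : H₂.IsRegularOfDegree r₂)
    (heq : (n₁ : ℤ) - r₂ = (n₂ : ℤ) - r₁)
    (hgt : (n₂ : ℤ) - r₁ > max (r₁ : ℤ) (r₂ : ℤ))
    (x : Fin n₁ ⊕ Fin n₂ → ℝ) :
    ((r₁ : ℝ) - n₂) * (x ⬝ᵥ x) ≤ x ⬝ᵥ ((joinGraph H₁ H₂).adjMatrix ℝ *ᵥ x) := by
  have heqR : (n₁ : ℝ) - r₂ = (n₂ : ℝ) - r₁ := by exact_mod_cast heq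
  have hgt1 : (r₁ : ℝ) < (n₂ : ℝ) - r₁ := by
    have := lt_of_le_of_lt (le_max_left (r₁:ℤ) r₂) hgt; exact_mod_cast this
  have hgt2 : (r₂ : ℝ) < (n₂ : ℝ) - r₁ := by
    have := lt_of_le_of_lt (le_max_right (r₁:ℤ) r₂) hgt; exact_mod_cast this
  have hn2 : (0:ℝ) < n₂ := by
    have : (0:ℝ) ≤ r₁ := by positivity
    linarith
  have hn1 : (0:ℝ) < n₁ := by
    have : (0:ℝ) ≤ r₂ := by positivity
    linarith
  rw [aux_join_quad, aux_norm_split]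
  rw [show ∑ i, x (Sum.inl i) = ∑ i, (x ∘ Sum.inl) i from rfl,
    show ∑ j, x (Sum.inr j) = ∑ j, (x ∘ Sum.inr) j from rfl]
  set x₁ : Fin n₁ → ℝ := x ∘ Sum.inl with hx₁def
  set x₂ : Fin n₂ → ℝ := x ∘ Sum.inr with hx₂def
  set a₁ : ℝ := (∑ i, x₁ i) / n₁ with ha₁def
  set a₂ : ℝ := (∑ i, x₂ i) / n₂ with ha₂def
  set z₁ : Fin n₁ → ℝ := x₁ - Function.const _ a₁ with hz₁def
  set z₂ : Fin n₂ → ℝ := x₂ - Function.const _ a₂ with hz₂def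
  have hx1 : x₁ = z₁ + Function.const _ a₁ := by funext i; simp [hz₁def]
  have hx2 : x₂ = z₂ + Function.const _ a₂ := by funext i; simp [hz₂def]
  have hs1 : ∑ i, x₁ i = a₁ * n₁ := by rw [ha₁def]; field_simp
  have hs2 : ∑ i, x₂ i = a₂ * n₂ := by rw [ha₂def]; field_simp
  have hzs1 : ∑ i, z₁ i = 0 := by
    have h : ∑ i, z₁ i = (∑ i, x₁ i) - n₁ * a₁ := by
      rw [hz₁def]
      simp only [Pi.sub_apply, Function.const, Finset.sum_sub_distrib, Finset.sum_const,
        Finset.card_univ, Fintype.card_fin, nsmul_eq_mul]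
    rw [h, hs1]; ring
  have hzs2 : ∑ i, z₂ i = 0 := by
    have h : ∑ i, z₂ i = (∑ i, x₂ i) - n₂ * a₂ := by
      rw [hz₂def]
      simp only [Pi.sub_apply, Function.const, Finset.sum_sub_distrib, Finset.sum_const,
        Finset.card_univ, Fintype.card_fin, nsmul_eq_mul]
    rw [h, hs2]; ring
  have hq1 : x₁ ⬝ᵥ (H₁.adjMatrix ℝ *ᵥ x₁)
      = z₁ ⬝ᵥ (H₁.adjMatrix ℝ *ᵥ z₁) + (r₁:ℝ)*a₁^2*n₁ := by
    rw [hx1, aux_shift_quad H₁ h₁, hzs1]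
    simp [Fintype.card_fin]
  have hq2 : x₂ ⬝ᵥ (H₂.adjMatrix ℝ *ᵥ x₂)
      = z₂ ⬝ᵥ (H₂.adjMatrix ℝ *ᵥ z₂) + (r₂:ℝ)*a₂^2*n₂ := by
    rw [hx2, aux_shift_quad H₂ h₂, hzs2]
    simp [Fintype.card_fin]
  have hN1 : x₁ ⬝ᵥ x₁ = z₁ ⬝ᵥ z₁ + a₁^2*n₁ := by
    rw [hx1, aux_shift_norm, hzs1]
    simp [Fintype.card_fin]
  have hN2 : x₂ ⬝ᵥ x₂ = z₂ ⬝ᵥ z₂ + a₂^2*n₂ := by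
    rw [hx2, aux_shift_norm, hzs2]
    simp [Fintype.card_fin]
  have hge1 := aux_quad_ge H₁ h₁ z₁
  have hge2 := aux_quad_ge H₂ h₂ z₂
  have hZ1 : 0 ≤ z₁ ⬝ᵥ z₁ := by
    apply Finset.sum_nonneg; intro i _; exact mul_self_nonneg _
  have hZ2 : 0 ≤ z₂ ⬝ᵥ z₂ := by
    apply Finset.sum_nonneg; intro i _; exact mul_self_nonneg _
  rw [hq1, hq2, hN1, hN2, hs1, hs2]
  have hkey : (r₁:ℝ)*a₁^2*n₁ + r₂*a₂^2*n₂ + 2*(a₁*n₁)*(a₂*n₂)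
      - ((r₁:ℝ)-n₂)*(a₁^2*n₁+a₂^2*n₂) = n₁*n₂*(a₁+a₂)^2 := by
    have hn1' : (n₁:ℝ) = (n₂:ℝ) - r₁ + r₂ := by linarith
    rw [hn1']; ring
  nlinarith [hkey, mul_nonneg (mul_nonneg hn1.le hn2.le) (sq_nonneg (a₁ + a₂)),
    mul_nonneg (by linarith : (0:ℝ) ≤ (n₂:ℝ) - 2*r₁) hZ1,
    mul_nonneg (by linarith : (0:ℝ) ≤ (n₂:ℝ) - r₁ - r₂) hZ2]

lemma aux_join_eig (h₁ : H₁.IsRegularOfDegree r₁) (h₂ : H₂.IsRegularOfDegree r₂)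
    (heq : (n₁ : ℤ) - r₂ = (n₂ : ℤ) - r₁) :
    (joinGraph H₁ H₂).adjMatrix ℝ *ᵥ pvec (Finset.univ.image Sum.inl) =
      ((r₁ : ℝ) - n₂) • pvec (Finset.univ.image Sum.inl) := by
  have heqR : (n₁ : ℝ) - r₂ = (n₂ : ℝ) - r₁ := by exact_mod_cast heq
  have hpl : ∀ u : Fin n₁, pvec (Finset.univ.image Sum.inl : Finset (Fin n₁ ⊕ Fin n₂)) (Sum.inl u) = 1 := by
    intro u; unfold pvec
    simp
  have hpr : ∀ u : Fin n₂, pvec (Finset.univ.image Sum.inl : Finset (Fin n₁ ⊕ Fin n₂)) (Sum.inr u) = -1 := by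
    intro u; unfold pvec
    simp
  funext w
  rw [mulVec, dotProduct]
  simp only [SimpleGraph.adjMatrix_apply]
  rw [Fintype.sum_sum_type]
  cases w with
  | inl u =>
    have h3 : ∀ v : Fin n₁, (joinGraph H₁ H₂).Adj (Sum.inl u) (Sum.inl v) = H₁.Adj u v :=
      fun _ => rfl
    have h4 : ∀ v : Fin n₂, (joinGraph H₁ H₂).Adj (Sum.inl u) (Sum.inr v) = True := fun _ => rfl
    simp only [h3, h4, if_true, hpl, hpr, mul_one, mul_neg]
    rw [aux_row_sum H₁ h₁ u]
    simp only [Pi.smul_apply, hpl, smul_eq_mul, mul_one]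
    simp only [Finset.sum_const, Finset.card_univ, Fintype.card_fin, nsmul_eq_mul, mul_one]
    ring
  | inr u =>
    have h3 : ∀ v : Fin n₁, (joinGraph H₁ H₂).Adj (Sum.inr u) (Sum.inl v) = True := fun _ => rfl
    have h4 : ∀ v : Fin n₂, (joinGraph H₁ H₂).Adj (Sum.inr u) (Sum.inr v) = H₂.Adj u v :=
      fun _ => rfl
    simp only [h3, h4, if_true, hpl, hpr, mul_one, mul_neg]
    rw [Finset.sum_neg_distrib, aux_row_sum H₂ h₂ u]
    simp only [Pi.smul_apply, hpr, smul_eq_mul, mul_neg, mul_one, Finset.sum_const,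
      Finset.card_univ, Fintype.card_fin, nsmul_eq_mul]
    linarith

end JoinAux

/-- The join of an `r₁`-regular graph on `n₁` vertices and an `r₂`-regular graph on `n₂` vertices
with `n₁ - r₂ = n₂ - r₁ > max r₁ r₂` has least adjacency eigenvalue `r₁ - n₂`, whose eigenvector is
the ±1 partition vector of the two sides; consequently it is `A`-exact. -/
theorem stmt18 {n₁ n₂ r₁ r₂ : ℕ} (H₁ : SimpleGraph (Fin n₁)) (H₂ : SimpleGraph (Fin n₂))
    [DecidableRel H₁.Adj] [DecidableRel H₂.Adj]
    (h₁ : H₁.IsRegularOfDegree r₁) (h₂ : H₂.IsRegularOfDegree r₂)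
    (heq : (n₁ : ℤ) - r₂ = (n₂ : ℤ) - r₁)
    (hgt : (n₂ : ℤ) - r₁ > max (r₁ : ℤ) (r₂ : ℤ)) :
    (⨅ i, (isHermitian_adj (joinGraph H₁ H₂)).eigenvalues i) = (r₁ : ℝ) - n₂ ∧
      (joinGraph H₁ H₂).adjMatrix ℝ *ᵥ pvec (Finset.univ.image Sum.inl) =
        ((r₁ : ℝ) - n₂) • pvec (Finset.univ.image Sum.inl) ∧
      (⨅ i, (isHermitian_adj (joinGraph H₁ H₂)).eigenvalues i) =
        2 / ((n₁ : ℝ) + n₂) *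
          (((joinGraph H₁ H₂).edgeFinset.card : ℝ) - 2 * mcut (joinGraph H₁ H₂)) := by
  set G := joinGraph H₁ H₂ with hGdef
  set S₀ : Finset (Fin n₁ ⊕ Fin n₂) := Finset.univ.image Sum.inl with hS₀def
  have hn2 : 0 < n₂ := by
    have h0 : (0:ℤ) ≤ (r₁:ℤ) := Int.natCast_nonneg r₁
    have := lt_of_le_of_lt (le_max_left (r₁:ℤ) r₂) hgt
    omega
  have heig : G.adjMatrix ℝ *ᵥ pvec S₀ = ((r₁:ℝ) - n₂) • pvec S₀ := aux_join_eig h₁ h₂ heq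
  have hpsd : ∀ x : Fin n₁ ⊕ Fin n₂ → ℝ,
      ((r₁:ℝ) - n₂) * (x ⬝ᵥ x) ≤ x ⬝ᵥ (G.adjMatrix ℝ *ᵥ x) :=
    aux_join_psd h₁ h₂ heq hgt
  have hpne : pvec S₀ ≠ 0 := by
    intro h
    have h2 := congrFun h (Sum.inr ⟨0, hn2⟩ : Fin n₁ ⊕ Fin n₂)
    unfold pvec at h2
    simp [hS₀def] at h2
  -- lower bound for all eigenvalues
  have hlow : ∀ i, ((r₁:ℝ) - n₂) ≤ (isHermitian_adj G).eigenvalues i := by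
    intro i
    have hv := (isHermitian_adj G).mulVec_eigenvectorBasis i
    set v : Fin n₁ ⊕ Fin n₂ → ℝ := ⇑((isHermitian_adj G).eigenvectorBasis i) with hvdef
    have hnorm1 : ‖(isHermitian_adj G).eigenvectorBasis i‖ = 1 :=
      (isHermitian_adj G).eigenvectorBasis.orthonormal.1 i
    have hinner : (inner ℝ ((isHermitian_adj G).eigenvectorBasis i)
        ((isHermitian_adj G).eigenvectorBasis i) : ℝ) = 1 := by
      rw [real_inner_self_eq_norm_mul_norm, hnorm1]; norm_num
    have hnorm : v ⬝ᵥ v = 1 := by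
      rw [← hinner, PiLp.inner_apply]
      simp only [RCLike.inner_apply, starRingEnd_apply, star_trivial]
      rfl
    have hquad : v ⬝ᵥ (G.adjMatrix ℝ *ᵥ v) = (isHermitian_adj G).eigenvalues i := by
      rw [hv, dotProduct_smul, hnorm]
      simp
    have := hpsd v
    rw [hnorm, hquad, mul_one] at this
    exact this
  -- (r₁ - n₂) is an eigenvalue
  have hspec : ((r₁:ℝ) - n₂) ∈ spectrum ℝ (G.adjMatrix ℝ) := by
    rw [← AlgEquiv.spectrum_eq (Matrix.toLinAlgEquiv' :
      Matrix (Fin n₁ ⊕ Fin n₂) (Fin n₁ ⊕ Fin n₂) ℝ ≃ₐ[ℝ] _) (G.adjMatrix ℝ),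
      ← Module.End.hasEigenvalue_iff_mem_spectrum]
    refine Module.End.hasEigenvalue_of_hasEigenvector (x := pvec S₀)
      ⟨Module.End.mem_eigenspace_iff.mpr ?_, hpne⟩
    rw [Matrix.toLinAlgEquiv'_apply]
    exact heig
  rw [Matrix.IsHermitian.spectrum_real_eq_range_eigenvalues (isHermitian_adj G)] at hspec
  obtain ⟨i₀, hi₀⟩ := hspec
  have hinf : (⨅ i, (isHermitian_adj G).eigenvalues i) = ((r₁:ℝ) - n₂) := by
    have : Nonempty (Fin n₁ ⊕ Fin n₂) := ⟨Sum.inr ⟨0, hn2⟩⟩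
    refine le_antisymm ?_ (le_ciInf hlow)
    calc (⨅ i, (isHermitian_adj G).eigenvalues i) ≤ (isHermitian_adj G).eigenvalues i₀ :=
          ciInf_le (Set.Finite.bddBelow (Set.finite_range _)) i₀
      _ = ((r₁:ℝ) - n₂) := hi₀
  refine ⟨hinf, heig, ?_⟩
  -- A-exactness
  have hcard : (Fintype.card (Fin n₁ ⊕ Fin n₂) : ℝ) = (n₁ : ℝ) + n₂ := by
    simp [Fintype.card_sum]
  have hN : (0:ℝ) < (n₁ : ℝ) + n₂ := by
    have : (0:ℝ) < (n₂:ℝ) := by exact_mod_cast hn2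
    positivity
  have hcut0 : ((r₁:ℝ) - n₂) * ((n₁:ℝ) + n₂)
      = 2 * (G.edgeFinset.card : ℝ) - 4 * (cutNum G S₀ : ℝ) := by
    rw [← aux_pvec_quad G S₀, heig, dotProduct_smul, aux_pvec_self, hcard, smul_eq_mul]
  obtain ⟨Sm, -, hSm⟩ := Finset.exists_mem_eq_sup (Finset.univ : Finset (Finset (Fin n₁ ⊕ Fin n₂)))
    ⟨∅, Finset.mem_univ ∅⟩ (fun S => cutNum G S)
  have hmcut : mcut G = cutNum G Sm := by unfold mcut; exact hSm
  have hSmle : ((r₁:ℝ) - n₂) * ((n₁:ℝ) + n₂)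
      ≤ 2 * (G.edgeFinset.card : ℝ) - 4 * (mcut G : ℝ) := by
    have h1 := hpsd (pvec Sm)
    rw [aux_pvec_self, aux_pvec_quad, hcard] at h1
    rw [hmcut]
    exact h1
  have hle' : cutNum G S₀ ≤ mcut G := by
    unfold mcut; exact Finset.le_sup (Finset.mem_univ S₀)
  have hle : (cutNum G S₀ : ℝ) ≤ (mcut G : ℝ) := Nat.cast_le.mpr hle'
  have hfinal : ((r₁:ℝ) - n₂) * ((n₁:ℝ) + n₂)
      = 2 * (G.edgeFinset.card : ℝ) - 4 * (mcut G : ℝ) := by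
    linarith
  rw [hinf, div_mul_eq_mul_div, eq_div_iff hN.ne']
  linarith [hfinal]
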